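/- For restricted additive valuations, the greedy rule that assigns each arriving item g to an agent of minimum current bundle value among agents with v_a({g}) > 0 yields a final allocation in which, for any two agents i and j, agent i's envy toward agent j satisfies v_i(X_j) − v_i(X_i) ≤ 1; consequently (after sorting agents by bundle value) the minimum subsidy is at most n(n−1)/2. -/

import Mathlib

open Finset MeasureTheory Set
open scoped ENNReal NNReal

lemma greedy_subsidy_aux (n : ℕ) (w : Fin n → ℝ) (e : Fin n → Fin n → ℝ)
    (he1 : ∀ i j, e i j ≤ 1) (he2 : ∀ i j, e i j ≤ w j - w i) :
    ∃ p : Fin n → ℝ, (∀ i, 0 ≤ p i) ∧ (∀ i j, e i j ≤ p i - p j) ∧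
      ∑ i, p i ≤ (n : ℝ) * ((n : ℝ) - 1) / 2 := by
  classical
  set S : Fin n → Set ℝ := fun i =>
    ⋃ j ∈ Finset.univ.filter (fun j => w i < w j),
      Set.Ico (w j - 1) (w j) ∩ Set.Ici (w i) with hS
  have hmeas : ∀ i, MeasurableSet (S i) := fun i =>
    Finset.measurableSet_biUnion _ fun j _ => (measurableSet_Ico.inter measurableSet_Ici)
  have hbound : ∀ i, volume (S i) ≤
      ((Finset.univ.filter (fun j => w i < w j)).card : ℝ≥0∞) := by
    intro i
    calc volume (S i) ≤ ∑ j ∈ Finset.univ.filter (fun j => w i < w j),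
        volume (Set.Ico (w j - 1) (w j) ∩ Set.Ici (w i)) :=
          measure_biUnion_finset_le _ _
      _ ≤ ∑ j ∈ Finset.univ.filter (fun j => w i < w j), 1 := by
          refine Finset.sum_le_sum fun j _ => ?_
          calc volume (Set.Ico (w j - 1) (w j) ∩ Set.Ici (w i))
              ≤ volume (Set.Ico (w j - 1) (w j)) := measure_mono (Set.inter_subset_left)
            _ = 1 := by rw [Real.volume_Ico]; norm_num
      _ = _ := by simp
  have hfin : ∀ i, volume (S i) ≠ ⊤ := fun i =>
    ((hbound i).trans_lt (ENNReal.natCast_lt_top _)).ne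
  set p : Fin n → ℝ := fun i => (volume (S i)).toReal with hp
  have hpnn : ∀ i, 0 ≤ p i := fun i => ENNReal.toReal_nonneg
  refine ⟨p, hpnn, ?_, ?_⟩
  · intro i j
    rcases le_or_gt (w j) (w i) with hw | hw
    · -- S j ⊆ S i ∪ Ico (w j) (w i)
      have hsub : S j ⊆ S i ∪ Set.Ico (w j) (w i) := by
        intro x hx
        simp only [hS, Set.mem_iUnion, Finset.mem_filter, Finset.mem_univ, true_and,
          exists_prop, Set.mem_inter_iff, Set.mem_Ico, Set.mem_Ici] at hx
        obtain ⟨k, hk, ⟨hx1, hx2⟩, hx3⟩ := hx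
        rcases lt_or_ge x (w i) with hxi | hxi
        · exact Or.inr ⟨hx3, hxi⟩
        · refine Or.inl ?_
          simp only [hS, Set.mem_iUnion, Finset.mem_filter, Finset.mem_univ, true_and,
            exists_prop, Set.mem_inter_iff, Set.mem_Ico, Set.mem_Ici]
          exact ⟨k, lt_of_le_of_lt hxi hx2, ⟨hx1, hx2⟩, hxi⟩
      have hv : volume (S j) ≤ volume (S i) + ENNReal.ofReal (w i - w j) := by
        calc volume (S j) ≤ volume (S i ∪ Set.Ico (w j) (w i)) := measure_mono hsub
          _ ≤ volume (S i) + volume (Set.Ico (w j) (w i)) := measure_union_le _ _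
          _ = volume (S i) + ENNReal.ofReal (w i - w j) := by rw [Real.volume_Ico]
      have := ENNReal.toReal_le_toReal (hfin j)
        (by simp [ENNReal.add_ne_top, hfin i]) |>.mpr hv
      rw [ENNReal.toReal_add (hfin i) ENNReal.ofReal_ne_top,
        ENNReal.toReal_ofReal (by linarith)] at this
      have h2 := he2 i j
      simp only [hp] at this ⊢
      linarith
    · -- w i < w j : S j ∪ B ⊆ S i, disjoint
      set Bs : Set ℝ := Set.Ico (w j - 1) (w j) ∩ Set.Ici (w i) with hBs
      have hsub : S j ∪ Bs ⊆ S i := by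
        intro x hx
        rcases hx with hx | hx
        · simp only [hS, Set.mem_iUnion, Finset.mem_filter, Finset.mem_univ, true_and,
            exists_prop, Set.mem_inter_iff, Set.mem_Ico, Set.mem_Ici] at hx ⊢
          obtain ⟨k, hk, ⟨hx1, hx2⟩, hx3⟩ := hx
          exact ⟨k, hw.trans hk, ⟨hx1, hx2⟩, le_trans hw.le hx3⟩
        · simp only [hS, Set.mem_iUnion, Finset.mem_filter, Finset.mem_univ, true_and,
            exists_prop, Set.mem_inter_iff, Set.mem_Ico, Set.mem_Ici]
          simp only [hBs, Set.mem_inter_iff, Set.mem_Ico, Set.mem_Ici] at hx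
          exact ⟨j, hw, hx.1, hx.2⟩
      have hdisj : Disjoint (S j) Bs := by
        refine Set.disjoint_left.mpr fun x hx hxB => ?_
        simp only [hS, Set.mem_iUnion, Finset.mem_filter, Finset.mem_univ, true_and,
          exists_prop, Set.mem_inter_iff, Set.mem_Ico, Set.mem_Ici] at hx
        obtain ⟨k, hk, _, hx3⟩ := hx
        simp only [hBs, Set.mem_inter_iff, Set.mem_Ico, Set.mem_Ici] at hxB
        exact absurd hxB.1.2 (not_lt.mpr hx3)
      have hBvol : volume Bs = ENNReal.ofReal (min 1 (w j - w i)) := by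
        rw [hBs, Set.Ico_inter_Ici, Real.volume_Ico]
        congr 1
        rcases le_total (w j - 1) (w i) with h | h
        · rw [sup_eq_right.mpr h, min_eq_right (by linarith)]
        · rw [sup_eq_left.mpr h, min_eq_left (by linarith)]; ring
      have hv : volume (S j) + ENNReal.ofReal (min 1 (w j - w i)) ≤ volume (S i) := by
        rw [← hBvol, ← measure_union hdisj (measurableSet_Ico.inter measurableSet_Ici)]
        exact measure_mono hsub
      have hfj : volume (S j) + ENNReal.ofReal (min 1 (w j - w i)) ≠ ⊤ := by
        simp [ENNReal.add_ne_top, hfin j]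
      have := ENNReal.toReal_le_toReal hfj (hfin i) |>.mpr hv
      rw [ENNReal.toReal_add (hfin j) ENNReal.ofReal_ne_top,
        ENNReal.toReal_ofReal (le_min zero_le_one (by linarith))] at this
      have h1 := he1 i j
      have h2 := he2 i j
      have hm : e i j ≤ min 1 (w j - w i) := le_min h1 h2
      simp only [hp] at this ⊢
      have : p j + min 1 (w j - w i) ≤ p i := this
      linarith [min_le_left (1:ℝ) (w j - w i)]
  · -- sum bound
    have hcard : ∀ i : Fin n,
        (Finset.univ.filter (fun j => w i < w j)).card
        + (Finset.univ.filter (fun j => w j < w i)).card ≤ n - 1 := by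
      intro i
      have hd : Disjoint (Finset.univ.filter (fun j => w i < w j))
          (Finset.univ.filter (fun j => w j < w i)) := by
        refine Finset.disjoint_left.mpr fun j hj hj' => ?_
        simp only [Finset.mem_filter] at hj hj'
        exact absurd hj'.2 (not_lt.mpr hj.2.le)
      have hsub : (Finset.univ.filter (fun j => w i < w j))
          ∪ (Finset.univ.filter (fun j => w j < w i)) ⊆ Finset.univ.erase i := by
        intro j hj
        simp only [Finset.mem_union, Finset.mem_filter] at hj
        refine Finset.mem_erase.mpr ⟨?_, Finset.mem_univ _⟩
        rintro rfl
        rcases hj with h | h <;> exact lt_irrefl _ h.2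
      calc _ = ((Finset.univ.filter (fun j => w i < w j))
            ∪ (Finset.univ.filter (fun j => w j < w i))).card :=
          (Finset.card_union_of_disjoint hd).symm
        _ ≤ (Finset.univ.erase i).card := Finset.card_le_card hsub
        _ = n - 1 := by rw [Finset.card_erase_of_mem (Finset.mem_univ _)]; simp
    have hswap : ∑ i : Fin n, (Finset.univ.filter (fun j => w i < w j)).card
        = ∑ i : Fin n, (Finset.univ.filter (fun j => w j < w i)).card := by
      simp only [Finset.card_filter]
      rw [Finset.sum_comm]
    have hsumN : 2 * ∑ i : Fin n, (Finset.univ.filter (fun j => w i < w j)).card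
        ≤ n * (n - 1) := by
      calc 2 * ∑ i : Fin n, (Finset.univ.filter (fun j => w i < w j)).card
          = ∑ i : Fin n, ((Finset.univ.filter (fun j => w i < w j)).card
            + (Finset.univ.filter (fun j => w j < w i)).card) := by
            rw [Finset.sum_add_distrib, ← hswap]; ring
        _ ≤ ∑ _i : Fin n, (n - 1) := Finset.sum_le_sum fun i _ => hcard i
        _ = n * (n - 1) := by simp [Finset.sum_const, mul_comm]
    have hpi : ∀ i, p i ≤ ((Finset.univ.filter (fun j => w i < w j)).card : ℝ) := by
      intro i
      have := ENNReal.toReal_le_toReal (hfin i) (ENNReal.natCast_ne_top _) |>.mpr (hbound i)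
      simpa using this
    calc ∑ i, p i ≤ ∑ i : Fin n, ((Finset.univ.filter (fun j => w i < w j)).card : ℝ) :=
        Finset.sum_le_sum fun i _ => hpi i
      _ = ((∑ i : Fin n, (Finset.univ.filter (fun j => w i < w j)).card : ℕ) : ℝ) := by
          push_cast; ring
      _ ≤ (n : ℝ) * ((n : ℝ) - 1) / 2 := by
          have h2 : ((2 * ∑ i : Fin n, (Finset.univ.filter (fun j => w i < w j)).card : ℕ) : ℝ)
              ≤ ((n * (n - 1) : ℕ) : ℝ) := Nat.cast_le.mpr hsumN
          rcases Nat.eq_zero_or_pos n with rfl | hn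
          · simp
          · have : ((n - 1 : ℕ) : ℝ) = (n : ℝ) - 1 := by
              rw [Nat.cast_sub hn]; simp
            push_cast [this] at h2 ⊢
            linarith

/-- Restricted additive valuations: each item `g` has a base value `u g ∈ [0,1]` and
`val i g ∈ {0, u g}`. Items arrive in order `0, 1, ..., m-1`; the greedy rule gives
each item `g` to an agent `a g` of minimum current bundle value among agents valuing
`g` positively. Then in the final allocation every pairwise envy is at most `1`, and a
nonnegative envy-eliminating subsidy vector of total at most `n(n-1)/2` exists. -/
theorem restricted_additive_greedy_subsidy (n m : ℕ)
    (u : Fin m → ℝ) (hu : ∀ g, 0 ≤ u g ∧ u g ≤ 1)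
    (val : Fin n → Fin m → ℝ)
    (hval : ∀ i g, val i g = 0 ∨ val i g = u g)
    (hpos : ∀ g, ∃ i, 0 < val i g)
    (a : Fin m → Fin n)
    (B : Fin m → Fin n → Finset (Fin m))
    (hB : ∀ (g : Fin m) (i : Fin n),
      B g i = (Finset.univ : Finset (Fin m)).filter (fun (j : Fin m) => j < g ∧ a j = i))
    (hgreedy : ∀ g : Fin m, 0 < val (a g) g ∧
      ∀ i, 0 < val i g → ∑ j ∈ B g (a g), val (a g) j ≤ ∑ j ∈ B g i, val i j)
    (X : Fin n → Finset (Fin m))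
    (hX : ∀ i, X i = (Finset.univ : Finset (Fin m)).filter (fun g => a g = i)) :
    (∀ i j, (∑ g ∈ X j, val i g) - ∑ g ∈ X i, val i g ≤ 1) ∧
    ∃ p : Fin n → ℝ, (∀ i, 0 ≤ p i) ∧
      (∀ i j, ∑ g ∈ X j, val i g + p j ≤ ∑ g ∈ X i, val i g + p i) ∧
      ∑ i, p i ≤ (n : ℝ) * ((n : ℝ) - 1) / 2 := by
  classical
  have valnn : ∀ i g, 0 ≤ val i g := by
    intro i g
    rcases hval i g with h | h <;> rw [h] <;> simp [(hu g).1]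
  have valle : ∀ (i j : Fin n) (h : Fin m), h ∈ X j → val i h ≤ val j h := by
    intro i j h hh
    have haj : a h = j := by
      rw [hX j] at hh
      exact (Finset.mem_filter.mp hh).2
    have hjpos : 0 < val j h := by rw [← haj]; exact (hgreedy h).1
    have hjval : val j h = u h := by
      rcases hval j h with h' | h'
      · rw [h'] at hjpos; exact absurd hjpos (lt_irrefl 0)
      · exact h'
    rcases hval i h with h' | h'
    · rw [h', hjval]; exact (hu h).1
    · rw [h', hjval]
  have hXsub : ∀ (g : Fin m) (i : Fin n), B g i ⊆ X i := by
    intro g i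
    rw [hB, hX]
    intro x hx
    simp only [Finset.mem_filter, Finset.mem_univ, true_and] at hx ⊢
    exact hx.2
  -- E2 : v_i(X_j) ≤ v_j(X_j)
  have E2 : ∀ i j, (∑ g ∈ X j, val i g) ≤ ∑ g ∈ X j, val j g := by
    intro i j
    exact Finset.sum_le_sum fun h hh => valle i j h hh
  -- E1 : v_i(X_j) ≤ v_i(X_i) + 1
  have E1 : ∀ i j, (∑ g ∈ X j, val i g) ≤ (∑ g ∈ X i, val i g) + 1 := by
    intro i j
    have hXinn : 0 ≤ ∑ g ∈ X i, val i g :=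
      Finset.sum_nonneg fun g _ => valnn i g
    set S := (X j).filter (fun h => 0 < val i h) with hSdef
    have hsum : (∑ g ∈ X j, val i g) = ∑ g ∈ S, val i g := by
      rw [hSdef]
      refine (Finset.sum_filter_of_ne ?_).symm
      intro g _ hg
      exact lt_of_le_of_ne (valnn i g) (Ne.symm hg)
    rcases Finset.eq_empty_or_nonempty S with hSe | hSne
    · rw [hsum, hSe, Finset.sum_empty]; linarith
    · set g := S.max' hSne with hgdef
      have hgS : g ∈ S := S.max'_mem hSne
      have hgXj : g ∈ X j := Finset.mem_of_mem_filter _ hgS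
      have hgpos : 0 < val i g := (Finset.mem_filter.mp hgS).2
      have hag : a g = j := by
        rw [hX j] at hgXj
        exact (Finset.mem_filter.mp hgXj).2
      have hgval : val i g ≤ 1 := by
        rcases hval i g with h' | h'
        · rw [h']; linarith
        · rw [h']; exact (hu g).2
      have hgr := (hgreedy g).2 i hgpos
      rw [hag] at hgr
      have herase : S.erase g ⊆ B g j := by
        intro h hh
        obtain ⟨hne, hhS⟩ := Finset.mem_erase.mp hh
        have hhXj : h ∈ X j := Finset.mem_of_mem_filter _ hhS
        have hah : a h = j := by rw [hX j] at hhXj; exact (Finset.mem_filter.mp hhXj).2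
        have hle : h ≤ g := S.le_max' h hhS
        rw [hB]
        simp only [Finset.mem_filter, Finset.mem_univ, true_and]
        exact ⟨lt_of_le_of_ne hle hne, hah⟩
      have h1 : ∑ h ∈ S.erase g, val i h ≤ ∑ h ∈ S.erase g, val j h :=
        Finset.sum_le_sum fun h hh =>
          valle i j h (Finset.mem_of_mem_filter _ (Finset.mem_erase.mp hh).2)
      have h2 : ∑ h ∈ S.erase g, val j h ≤ ∑ h ∈ B g j, val j h :=
        Finset.sum_le_sum_of_subset_of_nonneg herase fun h _ _ => valnn j h
      have h3 : ∑ h ∈ B g i, val i h ≤ ∑ h ∈ X i, val i h :=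
        Finset.sum_le_sum_of_subset_of_nonneg (hXsub g i) fun h _ _ => valnn i h
      have h4 : ∑ h ∈ S.erase g, val i h + val i g = ∑ h ∈ S, val i h :=
        Finset.sum_erase_add S _ hgS
      rw [hsum, ← h4]
      linarith
  refine ⟨fun i j => by linarith [E1 i j], ?_⟩
  obtain ⟨p, hp0, hpe, hps⟩ := greedy_subsidy_aux n (fun i => ∑ g ∈ X i, val i g)
    (fun i j => (∑ g ∈ X j, val i g) - ∑ g ∈ X i, val i g)
    (fun i j => by linarith [E1 i j]) (fun i j => by linarith [E2 i j])
  exact ⟨p, hp0, fun i j => by have := hpe i j; linarith, hps⟩
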